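/- arXiv:1806.05464 — 3 statements merged into one kernel-verified Lean document; each statement's English description precedes it below -/
import Mathlib

section
/- Let t₀ ∈ ℝ, let z : [t₀,∞) → ℝ^q, x : [t₀,∞) → ℝⁿ and ξ : [t₀,∞) → ℝᵐ be continuous signals, let {t_k}_{k≥0} be a strictly increasing sequence with first element t₀ generated by the triggering law with a class K∞ function γ̄, and define r(t) = ∫_{t_k}^{t} ξ(s) ds for t ∈ [t_k, t_{k+1}). Assume there exist class KL functions β_z, β_x and class K∞ functions γ_z^x, γ_z^r, γ_x^z, γ_x^r, γ_ξ^z, γ_ξ^x, γ_ξ^r such that for all t₀ ≤ t₀′ ≤ t: ‖z(t)‖ ≤ max{β_z(‖z(t₀′)‖, t−t₀′), γ_z^x(‖x_[t₀′,t]‖), γ_z^r(‖r_[t₀′,t]‖)}, ‖x(t)‖ ≤ max{β_x(‖x(t₀′)‖, t−t₀′), γ_x^z(‖z_[t₀′,t]‖), γ_x^r(‖r_[t₀′,t]‖)}, and ‖ξ(t)‖ ≤ max{γ_ξ^z(‖z_[t₀′,t]‖), γ_ξ^x(‖x_[t₀′,t]‖), γ_ξ^r(‖r_[t₀′,t]‖)}.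 Assume the small-gain condition γ_z^x(γ_x^z(s)) < s for all s > 0; set γ̄_z^r := max{γ_z^r, γ_z^x ∘ γ_x^r}, γ̄_x^r := max{γ_x^r, γ_x^z ∘ γ_z^r} and γ := max{γ_ξ^z ∘ γ̄_z^r, γ_ξ^x ∘ γ̄_x^r, γ_ξ^r}, and assume limsup_{s→0⁺} γ(s)/s < ∞. Finally assume there is ε > 1 with γ̄(s) ≥ ε·γ(s) for all s > 0 and that lim_{s→0⁺} γ̄(s)/s exists and is positive and finite. Then inf_{k≥0} (t_{k+1} − t_k) > 0 (no Zeno behavior), and z(t) → 0 and x(t) → 0 as t → ∞. -/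
open Filter Set

/-- A function is of class K∞. -/
def IsClassKInf (γ : ℝ → ℝ) : Prop :=
  ContinuousOn γ (Set.Ici 0) ∧ StrictMonoOn γ (Set.Ici 0) ∧ γ 0 = 0 ∧
    Filter.Tendsto γ Filter.atTop Filter.atTop

/-- A function is of class KL. -/
def IsClassKL (β : ℝ → ℝ → ℝ) : Prop :=
  (∀ t, 0 ≤ t → ContinuousOn (fun s => β s t) (Set.Ici 0) ∧
      StrictMonoOn (fun s => β s t) (Set.Ici 0) ∧ β 0 t = 0) ∧
  (∀ s, 0 ≤ s → AntitoneOn (fun t => β s t) (Set.Ici 0) ∧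
      Filter.Tendsto (fun t => β s t) Filter.atTop (nhds 0))

/-- `‖v_[a,b]‖ = sup_{a ≤ τ ≤ b} ‖v τ‖`. -/
noncomputable def supNorm {E : Type*} [NormedAddCommGroup E] (v : ℝ → E) (a b : ℝ) : ℝ :=
  sSup ((fun τ => ‖v τ‖) '' Set.Icc a b)

-- helpers
lemma supNorm_nonneg {E : Type*} [NormedAddCommGroup E] (v : ℝ → E) (a b : ℝ) :
    0 ≤ supNorm v a b :=
  Real.sSup_nonneg (by rintro x ⟨τ, _, rfl⟩; exact norm_nonneg _)

lemma supNorm_le {E : Type*} [NormedAddCommGroup E] {v : ℝ → E} {a b c : ℝ}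
    (hc : 0 ≤ c) (h : ∀ τ ∈ Set.Icc a b, ‖v τ‖ ≤ c) : supNorm v a b ≤ c :=
  Real.sSup_le (by rintro x ⟨τ, hτ, rfl⟩; exact h τ hτ) hc

lemma le_supNorm {E : Type*} [NormedAddCommGroup E] {v : ℝ → E} {a b τ : ℝ}
    (hbdd : BddAbove ((fun τ => ‖v τ‖) '' Set.Icc a b)) (hτ : τ ∈ Set.Icc a b) :
    ‖v τ‖ ≤ supNorm v a b :=
  le_csSup hbdd ⟨τ, hτ, rfl⟩

namespace IsClassKInf

variable {γ : ℝ → ℝ} (h : IsClassKInf γ)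
include h

lemma zero : γ 0 = 0 := h.2.2.1

lemma mono {a b : ℝ} (ha : 0 ≤ a) (hab : a ≤ b) : γ a ≤ γ b :=
  h.2.1.monotoneOn ha (le_trans ha hab) hab

lemma nonneg {a : ℝ} (ha : 0 ≤ a) : 0 ≤ γ a := h.zero ▸ h.mono le_rfl ha

lemma pos {a : ℝ} (ha : 0 < a) : 0 < γ a := by
  have := h.2.1 (le_refl (0:ℝ)) (le_of_lt ha) ha
  rwa [h.zero] at this

lemma le_reflect {a b : ℝ} (ha : 0 ≤ a) (hb : 0 ≤ b) (hle : γ a ≤ γ b) : a ≤ b := by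
  by_contra hab
  exact absurd (h.2.1 hb ha (lt_of_not_ge hab)) (not_lt.mpr hle)

lemma max_eq {a b : ℝ} (ha : 0 ≤ a) (hb : 0 ≤ b) :
    γ (max a b) = max (γ a) (γ b) := by
  rcases le_total a b with hab | hab
  · rw [max_eq_right hab, max_eq_right (h.mono ha hab)]
  · rw [max_eq_left hab, max_eq_left (h.mono hb hab)]

/-- surjectivity onto nonneg reals -/
lemma exists_eq {y : ℝ} (hy : 0 ≤ y) : ∃ b, 0 ≤ b ∧ γ b = y := by
  obtain ⟨c, hc, hc0⟩ := ((h.2.2.2.eventually_ge_atTop y).and (eventually_ge_atTop (0:ℝ))).exists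
  have : y ∈ Set.Icc (γ 0) (γ c) := ⟨by rw [h.zero]; exact hy, hc⟩
  obtain ⟨b, hb, hb2⟩ := intermediate_value_Icc hc0 (h.1.mono Set.Icc_subset_Ici_self) this
  exact ⟨b, hb.1, hb2⟩

end IsClassKInf


lemma supNorm_le_supNorm {E : Type*} [NormedAddCommGroup E] {v : ℝ → E} {a b b' : ℝ}
    (hbdd : BddAbove ((fun τ => ‖v τ‖) '' Set.Icc a b')) (hab : a ≤ b) (hbb' : b ≤ b') :
    supNorm v a b ≤ supNorm v a b' :=
  csSup_le_csSup hbdd ⟨‖v a‖, a, ⟨le_refl a, hab⟩, rfl⟩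
    (Set.image_mono (Set.Icc_subset_Icc_right hbb'))

namespace IsClassKL

variable {β : ℝ → ℝ → ℝ} (h : IsClassKL β)
include h

lemma nonneg {s u : ℝ} (hs : 0 ≤ s) (hu : 0 ≤ u) : 0 ≤ β s u := by
  have h0 := (h.1 u hu).2.2
  calc (0:ℝ) = β 0 u := h0.symm
    _ ≤ β s u := (h.1 u hu).2.1.monotoneOn (le_refl (0:ℝ)) hs hs

lemma le_init {s u : ℝ} (hs : 0 ≤ s) (hu : 0 ≤ u) : β s u ≤ β s 0 :=
  (h.2 s hs).1 (le_refl (0:ℝ)) hu hu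

lemma anti {s u u' : ℝ} (hs : 0 ≤ s) (hu : 0 ≤ u) (huu' : u ≤ u') : β s u' ≤ β s u :=
  (h.2 s hs).1 hu (le_trans hu huu') huu'

end IsClassKL

lemma smallgain_elim {γzx γxz : ℝ → ℝ}
    (hsg : ∀ s > 0, γzx (γxz s) < s) {Z A : ℝ} (hA : 0 ≤ A) (hZ0 : 0 ≤ Z)
    (h : Z ≤ max A (γzx (γxz Z))) : Z ≤ A := by
  by_contra hc
  push_neg at hc
  rcases le_max_iff.mp h with h1 | h1
  · exact absurd h1 (not_le.mpr hc)
  · exact absurd (lt_of_le_of_lt h1 (hsg Z (lt_of_le_of_lt hA hc))) (lt_irrefl Z)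

/-- The next triggering time (in `EReal`, so that `sInf ∅ = ⊤`). -/
noncomputable def triggerTime {E : Type*} [NormedAddCommGroup E]
    (γb : ℝ → ℝ) (r : ℝ → E) (tk : ℝ) : EReal :=
  sInf (((↑) : ℝ → EReal) ''
    {t : ℝ | tk < t ∧ (t - tk) * γb (supNorm r tk t) = supNorm r tk t ∧ supNorm r tk t ≠ 0})

/-- Theorem 2 of the paper: event-triggered control of interconnected nonlinear systems. -/
theorem event_triggered_interconnected {q n m : ℕ} (t0 : ℝ)
    (z : ℝ → EuclideanSpace ℝ (Fin q)) (x : ℝ → EuclideanSpace ℝ (Fin n))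
    (ξ r : ℝ → EuclideanSpace ℝ (Fin m))
    (hzcont : ContinuousOn z (Set.Ici t0)) (hxcont : ContinuousOn x (Set.Ici t0))
    (hξcont : ContinuousOn ξ (Set.Ici t0))
    (t : ℕ → ℝ) (ht0 : t 0 = t0) (hmono : StrictMono t)
    (γb : ℝ → ℝ) (hγb : IsClassKInf γb)
    (hr : ∀ k : ℕ, ∀ s ∈ Set.Ico (t k) (t (k + 1)), r s = ∫ τ in (t k)..s, ξ τ)
    (htrig : ∀ k : ℕ, ((t (k + 1) : ℝ) : EReal) = triggerTime γb r (t k))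
    (βz βx : ℝ → ℝ → ℝ) (hβz : IsClassKL βz) (hβx : IsClassKL βx)
    (γzx γzr γxz γxr γξz γξx γξr : ℝ → ℝ)
    (hγzx : IsClassKInf γzx) (hγzr : IsClassKInf γzr) (hγxz : IsClassKInf γxz)
    (hγxr : IsClassKInf γxr) (hγξz : IsClassKInf γξz) (hγξx : IsClassKInf γξx)
    (hγξr : IsClassKInf γξr)
    (hISSz : ∀ t0' t', t0 ≤ t0' → t0' ≤ t' →
      ‖z t'‖ ≤ max (βz ‖z t0'‖ (t' - t0'))
        (max (γzx (supNorm x t0' t')) (γzr (supNorm r t0' t'))))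
    (hISSx : ∀ t0' t', t0 ≤ t0' → t0' ≤ t' →
      ‖x t'‖ ≤ max (βx ‖x t0'‖ (t' - t0'))
        (max (γxz (supNorm z t0' t')) (γxr (supNorm r t0' t'))))
    (hBSIBO : ∀ t0' t', t0 ≤ t0' → t0' ≤ t' →
      ‖ξ t'‖ ≤ max (γξz (supNorm z t0' t'))
        (max (γξx (supNorm x t0' t')) (γξr (supNorm r t0' t'))))
    -- small-gain condition
    (hsg : ∀ s > 0, γzx (γxz s) < s)
    -- γ := max{γ_ξ^z ∘ γ̄_z^r, γ_ξ^x ∘ γ̄_x^r, γ_ξ^r} with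
    -- γ̄_z^r := max{γ_z^r, γ_z^x ∘ γ_x^r}, γ̄_x^r := max{γ_x^r, γ_x^z ∘ γ_z^r}
    (γ : ℝ → ℝ)
    (hγdef : ∀ s : ℝ, γ s =
      max (γξz (max (γzr s) (γzx (γxr s))))
        (max (γξx (max (γxr s) (γxz (γzr s)))) (γξr s)))
    (hlimsup : Filter.limsup (fun s => ((γ s / s : ℝ) : EReal))
      (nhdsWithin 0 (Set.Ioi 0)) < ⊤)
    (ε : ℝ) (hε : 1 < ε) (hγbγ : ∀ s > 0, ε * γ s ≤ γb s)
    (hlim : ∃ C : ℝ, 0 < C ∧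
      Filter.Tendsto (fun s => γb s / s) (nhdsWithin 0 (Set.Ioi 0)) (nhds C)) :
    (0 < ⨅ k : ℕ, (t (k + 1) - t k)) ∧
      Filter.Tendsto z Filter.atTop (nhds 0) ∧
      Filter.Tendsto x Filter.atTop (nhds 0) := by
  classical
  obtain ⟨C, hC, hClim⟩ := hlim
  have ht0le : ∀ k, t0 ≤ t k := fun k => ht0 ▸ hmono.monotone (Nat.zero_le k)
  have htk_lt : ∀ k, t k < t (k + 1) := fun k => hmono (Nat.lt_succ_self k)
  set T : ℕ → Set ℝ := fun k => {s : ℝ | t k < s ∧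
      (s - t k) * γb (supNorm r (t k) s) = supNorm r (t k) s ∧ supNorm r (t k) s ≠ 0}
    with hTdef
  have hTinf : ∀ k, ((t (k + 1) : ℝ) : EReal) = sInf (((↑) : ℝ → EReal) '' T k) :=
    fun k => htrig k
  have hT_ex : ∀ k, ∀ δ > (0:ℝ), ∃ s ∈ T k, s < t (k + 1) + δ := by
    intro k δ hδ
    have hlt : sInf (((↑) : ℝ → EReal) '' T k) < ((t (k+1) + δ : ℝ) : EReal) := by
      rw [← hTinf k]
      exact_mod_cast EReal.coe_lt_coe_iff.mpr (by linarith)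
    obtain ⟨e, ⟨s, hs, rfl⟩, he⟩ := sInf_lt_iff.mp hlt
    exact ⟨s, hs, EReal.coe_lt_coe_iff.mp he⟩
  have hT_ge : ∀ k, ∀ s ∈ T k, t (k + 1) ≤ s := by
    intro k s hs
    have : ((t (k+1) : ℝ) : EReal) ≤ (s : EReal) := by
      rw [hTinf k]; exact sInf_le ⟨s, hs, rfl⟩
    exact_mod_cast this
  have hT_lb : ∀ (k : ℕ) (c : ℝ), (∀ s ∈ T k, c ≤ s) → c ≤ t (k + 1) := by
    intro k c hc
    have : (c : EReal) ≤ ((t (k+1) : ℝ) : EReal) := by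
      rw [hTinf k]
      refine le_sInf ?_
      rintro e ⟨s, hs, rfl⟩
      exact_mod_cast hc s hs
    exact_mod_cast this
  have hrval : ∀ (j : ℕ) (s : ℝ), t j ≤ s → s < t (j + 1) → ∀ M : ℝ, 0 ≤ M →
      (∀ u ∈ Set.Icc (t j) s, ‖ξ u‖ ≤ M) → ‖r s‖ ≤ M * (s - t j) := by
    intro j s hjs hsj M hM hMb
    rw [hr j s ⟨hjs, hsj⟩]
    have := intervalIntegral.norm_integral_le_of_norm_le_const
      (f := ξ) (a := t j) (b := s) (C := M) ?_
    · rwa [abs_of_nonneg (by linarith)] at this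
    · intro u hu
      rw [Set.uIoc_of_le hjs] at hu
      exact hMb u ⟨le_of_lt hu.1, hu.2⟩
  have hKex : ∀ B : ℝ, ∃ K, 0 < K ∧ ∀ s, 0 < s → s ≤ B → γb s ≤ K * s := by
    intro B
    have hev : ∀ᶠ s in nhdsWithin 0 (Set.Ioi 0), γb s / s < C + 1 :=
      hClim.eventually (eventually_lt_nhds (lt_add_one C))
    rw [eventually_nhdsWithin_iff] at hev
    obtain ⟨δ, hδ, hball⟩ := Metric.eventually_nhds_iff.mp hev
    set G := max (γb (max B 0)) 0 with hGdef
    refine ⟨max (C + 1) (G / δ), lt_of_lt_of_le (by linarith) (le_max_left _ _), ?_⟩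
    intro s hs hsB
    rcases lt_or_ge s δ with h1 | h1
    · have hb := hball (y := s) (by rw [Real.dist_eq, sub_zero, abs_of_pos hs]; exact h1)
        (Set.mem_Ioi.mpr hs)
      have h2 : γb s < (C + 1) * s := by rwa [div_lt_iff₀ hs] at hb
      calc γb s ≤ (C + 1) * s := le_of_lt h2
        _ ≤ max (C + 1) (G / δ) * s :=
          mul_le_mul_of_nonneg_right (le_max_left _ _) (le_of_lt hs)
    · have h2 : γb s ≤ G :=
        le_trans (hγb.mono (le_of_lt hs) (le_trans hsB (le_max_left _ _))) (le_max_left _ _)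
      have h3 : G ≤ (G / δ) * s := by
        rw [div_mul_eq_mul_div, le_div_iff₀ hδ]
        exact mul_le_mul_of_nonneg_left h1 (le_max_right _ _)
      calc γb s ≤ G := h2
        _ ≤ (G / δ) * s := h3
        _ ≤ _ := mul_le_mul_of_nonneg_right (le_max_right _ _) (le_of_lt hs)
  have key : ∀ (k : ℕ) (sh : ℝ), sh ∈ T k → ∀ M : ℝ, 0 ≤ M →
      (∀ u ∈ Set.Icc (t k) sh, ‖ξ u‖ ≤ M) →
      (∀ u, t k ≤ u → u ≤ sh → ∃ j, t j ≤ u ∧ u < t (j + 1) ∧ t k ≤ t j) →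
      0 < supNorm r (t k) sh ∧ γb (supNorm r (t k) sh) ≤ M ∧
        ∀ u ∈ Set.Icc (t k) sh, ‖r u‖ ≤ supNorm r (t k) sh := by
    intro k sh hsh M hM hMb hcov
    obtain ⟨hlt, heq, hne⟩ := hsh
    set S := supNorm r (t k) sh with hS
    have hrb : ∀ u ∈ Set.Icc (t k) sh, ‖r u‖ ≤ M * (sh - t k) := by
      intro u hu
      obtain ⟨j, hj1, hj2, hj3⟩ := hcov u hu.1 hu.2
      have h1 : ‖r u‖ ≤ M * (u - t j) :=
        hrval j u hj1 hj2 M hM (fun v hv => hMb v ⟨le_trans hj3 hv.1, le_trans hv.2 hu.2⟩)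
      have : u - t j ≤ sh - t k := by
        have := hu.2; have := hj3; linarith
      exact h1.trans (by nlinarith)
    have hSle : S ≤ M * (sh - t k) :=
      supNorm_le (mul_nonneg hM (by linarith)) hrb
    have hS0 : 0 ≤ S := supNorm_nonneg _ _ _
    have hSpos : 0 < S := lt_of_le_of_ne hS0 (Ne.symm hne)
    have hγbS : γb S ≤ M := by
      have h2 : γb S * (sh - t k) ≤ M * (sh - t k) := by
        rw [mul_comm] at heq; rw [heq]; exact hSle
      exact le_of_mul_le_mul_right h2 (by linarith)
    refine ⟨hSpos, hγbS, fun u hu => ?_⟩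
    exact le_supNorm ⟨M * (sh - t k), by rintro e ⟨v, hv, rfl⟩; exact hrb v hv⟩ hu
  have dwell : ∀ (k : ℕ) (sh : ℝ), sh ∈ T k → ∀ K B : ℝ, 0 < K →
      (∀ s, 0 < s → s ≤ B → γb s ≤ K * s) → 0 < supNorm r (t k) sh →
      supNorm r (t k) sh ≤ B → 1 / K ≤ sh - t k := by
    intro k sh hsh K B hK hKb hSpos hSB
    obtain ⟨hlt, heq, hne⟩ := hsh
    set S := supNorm r (t k) sh with hS
    have hKS := hKb S hSpos hSB
    rw [div_le_iff₀ hK]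
    nlinarith [mul_le_mul_of_nonneg_left hKS (le_of_lt (sub_pos.mpr hlt)), heq, hSpos]
  have coverGen : ∀ s : ℝ, t0 ≤ s → (∃ j, s < t j) → ∃ k, t k ≤ s ∧ s < t (k + 1) := by
    intro s hs hex
    have h0 : ¬ s < t 0 := by rw [ht0]; exact not_lt.mpr hs
    have hj1 : s < t (Nat.find hex) := Nat.find_spec hex
    have hj1ne : Nat.find hex ≠ 0 := by
      intro h; rw [h] at hj1; exact h0 hj1
    obtain ⟨k, hk⟩ := Nat.exists_eq_succ_of_ne_zero hj1ne
    refine ⟨k, not_lt.mp (Nat.find_min hex (m := k) (by omega)), ?_⟩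
    rw [show k + 1 = Nat.find hex by omega]
    exact hj1
  have hZeno : ∀ M : ℝ, ∃ k, M < t k := by
    by_contra hcon
    push_neg at hcon
    obtain ⟨M, hM⟩ := hcon
    have hbdd : BddAbove (Set.range t) := ⟨M, by rintro y ⟨k, rfl⟩; exact hM k⟩
    set Tstar := sSup (Set.range t) with hTs
    have hlt_star : ∀ k, t k < Tstar :=
      fun k => lt_of_lt_of_le (htk_lt k) (le_csSup hbdd ⟨k + 1, rfl⟩)
    have hex_star : ∀ s : ℝ, s < Tstar → ∃ j, s < t j := by
      intro s hs
      obtain ⟨y, ⟨j, rfl⟩, hy⟩ := exists_lt_of_lt_csSup (Set.range_nonempty t) hs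
      exact ⟨j, hy⟩
    have ht0Ts : t0 ≤ Tstar := le_trans (ht0le 0) (le_of_lt (hlt_star 0))
    set Ms := sSup ((fun u => ‖ξ u‖) '' Set.Icc t0 Tstar) with hMsdef
    have hbddξ : BddAbove ((fun u => ‖ξ u‖) '' Set.Icc t0 Tstar) :=
      IsCompact.bddAbove_image isCompact_Icc ((hξcont.mono Set.Icc_subset_Ici_self).norm)
    have hMsb : ∀ u ∈ Set.Icc t0 Tstar, ‖ξ u‖ ≤ Ms := fun u hu => le_csSup hbddξ ⟨u, hu, rfl⟩
    have hMs0 : 0 ≤ Ms := le_trans (norm_nonneg _) (hMsb t0 ⟨le_refl _, ht0Ts⟩)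
    obtain ⟨B, hB0, hBe⟩ := hγb.exists_eq (show (0:ℝ) ≤ max Ms 1 by positivity)
    obtain ⟨K, hK, hKb⟩ := hKex B
    have h2K : 0 < 1 / (2 * K) := by positivity
    obtain ⟨k, hk⟩ := hex_star (Tstar - 1 / (2 * K)) (by linarith)
    have hδ2 : 0 < t (k + 1 + 1) - t (k + 1) := sub_pos.mpr (htk_lt (k + 1))
    obtain ⟨sh, hsh, hshlt⟩ := hT_ex k _ hδ2
    have hshTs : sh < Tstar := by
      have h1 : sh < t (k + 1 + 1) := by linarith
      exact lt_trans h1 (hlt_star (k + 1 + 1))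
    have hcov : ∀ u, t k ≤ u → u ≤ sh → ∃ j, t j ≤ u ∧ u < t (j + 1) ∧ t k ≤ t j := by
      intro u hku hush
      obtain ⟨j, hj1, hj2⟩ := coverGen u (le_trans (ht0le k) hku)
        (hex_star u (lt_of_le_of_lt hush hshTs))
      refine ⟨j, hj1, hj2, ?_⟩
      have hkj : k < j + 1 := hmono.lt_iff_lt.mp (lt_of_le_of_lt hku hj2)
      exact hmono.monotone (by omega)
    have hMb : ∀ u ∈ Set.Icc (t k) sh, ‖ξ u‖ ≤ Ms := fun u hu =>
      hMsb u ⟨le_trans (ht0le k) hu.1, le_trans hu.2 (le_of_lt hshTs)⟩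
    obtain ⟨hSpos, hγbS, _⟩ := key k sh hsh Ms hMs0 hMb hcov
    have hSB : supNorm r (t k) sh ≤ B :=
      hγb.le_reflect (le_of_lt hSpos) hB0
        (by rw [hBe]; exact le_trans hγbS (le_max_left _ _))
    have hdw := dwell k sh hsh K B hK hKb hSpos hSB
    have h1Ksum : 1 / (2 * K) + 1 / (2 * K) = 1 / K := by
      rw [← add_div, div_eq_div_iff (by positivity : (0:ℝ) < 2 * K).ne' (ne_of_gt hK)]
      ring
    have : Tstar < sh := by linarith
    exact absurd hshTs (not_lt.mpr (le_of_lt this))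
  have htop : Filter.Tendsto t Filter.atTop Filter.atTop :=
    tendsto_atTop_atTop_of_monotone hmono.monotone
      (fun b => (hZeno b).imp fun k hk => le_of_lt hk)
  have cover : ∀ s, t0 ≤ s → ∃ k, t k ≤ s ∧ s < t (k + 1) := fun s hs =>
    coverGen s hs (hZeno s)
  have cover' : ∀ (a : ℕ) (u : ℝ), t a ≤ u → ∃ j, t j ≤ u ∧ u < t (j + 1) ∧ t a ≤ t j := by
    intro a u hau
    obtain ⟨j, hj1, hj2⟩ := cover u (le_trans (ht0le a) hau)
    have haj : a < j + 1 := hmono.lt_iff_lt.mp (lt_of_le_of_lt hau hj2)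
    exact ⟨j, hj1, hj2, hmono.monotone (by omega)⟩
  -- derived small-gain in the other direction
  have hsg' : ∀ s > (0:ℝ), γxz (γzx s) < s := by
    intro s hs
    by_contra hcon
    push_neg at hcon
    have h1 : γzx s ≤ γzx (γxz (γzx s)) :=
      hγzx.mono (le_of_lt hs) (le_trans hcon (le_refl _)) |>.trans_eq (by rfl) |>.trans (le_refl _)
    exact absurd (lt_of_le_of_lt h1 (hsg (γzx s) (hγzx.pos hs)))
      (lt_irrefl _)
  -- Step B : uniform bound on ξ
  set Bz := βz ‖z t0‖ 0 with hBzdef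
  set Bx := βx ‖x t0‖ 0 with hBxdef
  have hBz0 : 0 ≤ Bz := hβz.nonneg (norm_nonneg _) le_rfl
  have hBx0 : 0 ≤ Bx := hβx.nonneg (norm_nonneg _) le_rfl
  set C0 := max (γξz (max Bz (γzx Bx))) (γξx (max Bx (γxz Bz))) with hC0def
  have hC00 : 0 ≤ C0 :=
    le_trans (hγξz.nonneg (le_trans hBz0 (le_max_left _ _))) (le_max_left _ _)
  obtain ⟨ρg, hρg0, hρge⟩ := hγb.exists_eq (show (0:ℝ) ≤ max C0 1 by positivity)
  set Mz := max (max Bz (γzx Bx)) (max (γzr ρg) (γzx (γxr ρg))) with hMzdef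
  set Mx := max (max Bx (γxz Bz)) (max (γxr ρg) (γxz (γzr ρg))) with hMxdef
  have hstepB : ∀ N : ℕ, ∀ u0 ∈ Set.Icc t0 (t N),
      ‖ξ u0‖ ≤ C0 ∧ ‖z u0‖ ≤ Mz ∧ ‖x u0‖ ≤ Mx := by
    intro N u0 hu0
    have ht0N : t0 ≤ t N := ht0le N
    have hbddz : BddAbove ((fun τ => ‖z τ‖) '' Set.Icc t0 (t N)) :=
      IsCompact.bddAbove_image isCompact_Icc ((hzcont.mono Set.Icc_subset_Ici_self).norm)
    have hbddx : BddAbove ((fun τ => ‖x τ‖) '' Set.Icc t0 (t N)) :=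
      IsCompact.bddAbove_image isCompact_Icc ((hxcont.mono Set.Icc_subset_Ici_self).norm)
    have hbddξ : BddAbove ((fun τ => ‖ξ τ‖) '' Set.Icc t0 (t N)) :=
      IsCompact.bddAbove_image isCompact_Icc ((hξcont.mono Set.Icc_subset_Ici_self).norm)
    set ZN := supNorm z t0 (t N) with hZNdef
    set XN := supNorm x t0 (t N) with hXNdef
    set ΞN := supNorm ξ t0 (t N) with hΞNdef
    have hΞ0 : 0 ≤ ΞN := supNorm_nonneg _ _ _
    have hZN0 : 0 ≤ ZN := supNorm_nonneg _ _ _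
    have hXN0 : 0 ≤ XN := supNorm_nonneg _ _ _
    -- (1) trigger-based bound for r on [t0, t N)
    have hrbd0 : ∀ u, t0 ≤ u → u < t N → γb ‖r u‖ ≤ ΞN := by
      intro u hu huN
      refine le_of_forall_pos_le_add ?_
      intro η hη
      have hcw : ContinuousWithinAt ξ (Set.Ici t0) (t N) := hξcont (t N) ht0N
      obtain ⟨δ, hδ, hδb⟩ := Metric.continuousWithinAt_iff.mp hcw η hη
      have hδ2 : 0 < δ / 2 := by linarith
      have hbddξ' : BddAbove ((fun τ => ‖ξ τ‖) '' Set.Icc t0 (t N + δ/2)) :=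
        IsCompact.bddAbove_image isCompact_Icc ((hξcont.mono Set.Icc_subset_Ici_self).norm)
      have hΞext : supNorm ξ t0 (t N + δ/2) ≤ ΞN + η := by
        refine supNorm_le (by linarith) ?_
        intro v hv
        rcases le_or_gt v (t N) with hvN | hvN
        · exact le_trans (le_supNorm hbddξ ⟨hv.1, hvN⟩) (by linarith)
        · have hd : dist v (t N) < δ := by
            rw [Real.dist_eq, abs_of_pos (by linarith)]
            linarith [hv.2]
          have h6 := hδb (show v ∈ Set.Ici t0 from hv.1) hd
          have h5 : ‖ξ v‖ - ‖ξ (t N)‖ ≤ ‖ξ v - ξ (t N)‖ := norm_sub_norm_le _ _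
          rw [dist_eq_norm] at h6
          have h7 : ‖ξ (t N)‖ ≤ ΞN := le_supNorm hbddξ ⟨ht0N, le_refl _⟩
          linarith
      obtain ⟨k, hk1, hk2⟩ := cover u hu
      have hk1N : t (k + 1) ≤ t N := by
        have : k < N := hmono.lt_iff_lt.mp (lt_of_le_of_lt hk1 huN)
        exact hmono.monotone (by omega)
      obtain ⟨sh, hsh, hshlt⟩ := hT_ex k (δ/2) hδ2
      have hshle : sh ≤ t N + δ/2 := by linarith
      set M1 := supNorm ξ t0 (t N + δ/2) with hM1def
      have hM10 : 0 ≤ M1 := supNorm_nonneg _ _ _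
      have hMb : ∀ v ∈ Set.Icc (t k) sh, ‖ξ v‖ ≤ M1 := fun v hv =>
        le_supNorm hbddξ' ⟨le_trans (ht0le k) hv.1, le_trans hv.2 hshle⟩
      obtain ⟨hSpos, hγbS, hrleS⟩ := key k sh hsh M1 hM10 hMb
        (fun u' h1 _ => cover' k u' h1)
      have hu_mem : u ∈ Set.Icc (t k) sh := ⟨hk1, le_trans (le_of_lt hk2) (hT_ge k sh hsh)⟩
      calc γb ‖r u‖ ≤ γb (supNorm r (t k) sh) :=
            hγb.mono (norm_nonneg _) (hrleS u hu_mem)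
        _ ≤ M1 := hγbS
        _ ≤ ΞN + η := hΞext
    have hrbd : ∀ u ∈ Set.Icc t0 (t N), γb ‖r u‖ ≤ ΞN := by
      intro u hu
      rcases lt_or_eq_of_le hu.2 with h | h
      · exact hrbd0 u hu.1 h
      · have hrN : r u = 0 := by
          rw [h, hr N (t N) ⟨le_refl _, htk_lt N⟩, intervalIntegral.integral_same]
        rw [hrN, norm_zero, hγb.zero]
        exact hΞ0
    -- bounds on r sup
    obtain ⟨ρN, hρN0, hρNe⟩ := hγb.exists_eq (show (0:ℝ) ≤ max ΞN 1 by positivity)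
    have hrle : ∀ u ∈ Set.Icc t0 (t N), ‖r u‖ ≤ ρN := fun u hu =>
      hγb.le_reflect (norm_nonneg _) hρN0
        (by rw [hρNe]; exact (hrbd u hu).trans (le_max_left _ _))
    have hbddr : BddAbove ((fun τ => ‖r τ‖) '' Set.Icc t0 (t N)) :=
      ⟨ρN, by rintro e ⟨v, hv, rfl⟩; exact hrle v hv⟩
    set RN := supNorm r t0 (t N) with hRNdef
    have hRN0 : 0 ≤ RN := supNorm_nonneg _ _ _
    have hγbRN : γb RN ≤ ΞN := by
      obtain ⟨B1, hB10, hB1e⟩ := hγb.exists_eq hΞ0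
      have hRB1 : RN ≤ B1 := supNorm_le hB10 (fun u hu =>
        hγb.le_reflect (norm_nonneg _) hB10 (by rw [hB1e]; exact hrbd u hu))
      calc γb RN ≤ γb B1 := hγb.mono hRN0 hRB1
        _ = ΞN := hB1e
    -- ISS sup bounds
    have hZNle : ZN ≤ max Bz (max (γzx XN) (γzr RN)) := by
      refine supNorm_le (le_trans hBz0 (le_max_left _ _)) ?_
      intro τ hτ
      refine le_trans (hISSz t0 τ le_rfl hτ.1) ?_
      have h1 : βz ‖z t0‖ (τ - t0) ≤ Bz := hβz.le_init (norm_nonneg _) (by linarith [hτ.1])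
      have h2 : γzx (supNorm x t0 τ) ≤ γzx XN :=
        hγzx.mono (supNorm_nonneg _ _ _) (supNorm_le_supNorm hbddx hτ.1 hτ.2)
      have h3 : γzr (supNorm r t0 τ) ≤ γzr RN :=
        hγzr.mono (supNorm_nonneg _ _ _) (supNorm_le_supNorm hbddr hτ.1 hτ.2)
      exact max_le_max h1 (max_le_max h2 h3)
    have hXNle : XN ≤ max Bx (max (γxz ZN) (γxr RN)) := by
      refine supNorm_le (le_trans hBx0 (le_max_left _ _)) ?_
      intro τ hτ
      refine le_trans (hISSx t0 τ le_rfl hτ.1) ?_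
      have h1 : βx ‖x t0‖ (τ - t0) ≤ Bx := hβx.le_init (norm_nonneg _) (by linarith [hτ.1])
      have h2 : γxz (supNorm z t0 τ) ≤ γxz ZN :=
        hγxz.mono (supNorm_nonneg _ _ _) (supNorm_le_supNorm hbddz hτ.1 hτ.2)
      have h3 : γxr (supNorm r t0 τ) ≤ γxr RN :=
        hγxr.mono (supNorm_nonneg _ _ _) (supNorm_le_supNorm hbddr hτ.1 hτ.2)
      exact max_le_max h1 (max_le_max h2 h3)
    -- small-gain elimination
    set A1 := max (max Bz (γzx Bx)) (max (γzr RN) (γzx (γxr RN))) with hA1def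
    set A2 := max (max Bx (γxz Bz)) (max (γxr RN) (γxz (γzr RN))) with hA2def
    have hA10 : 0 ≤ A1 := le_trans (le_trans hBz0 (le_max_left _ _)) (le_max_left _ _)
    have hA20 : 0 ≤ A2 := le_trans (le_trans hBx0 (le_max_left _ _)) (le_max_left _ _)
    have hZNA : ZN ≤ A1 := by
      refine smallgain_elim hsg hA10 hZN0 ?_
      have h4 : γzx XN ≤ max (γzx Bx) (max (γzx (γxz ZN)) (γzx (γxr RN))) := by
        rw [← hγzx.max_eq (hγxz.nonneg hZN0) (hγxr.nonneg hRN0),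
          ← hγzx.max_eq hBx0 (le_max_iff.mpr (Or.inl (hγxz.nonneg hZN0)))]
        exact hγzx.mono hXN0 hXNle
      refine le_trans hZNle (max_le ?_ (max_le (le_trans h4 ?_) ?_))
      · exact le_trans (le_trans (le_max_left _ _) (le_max_left _ _)) (le_max_left _ _)
      · refine max_le ?_ (max_le ?_ ?_)
        · exact le_trans (le_trans (le_max_right _ _) (le_max_left _ _)) (le_max_left _ _)
        · exact le_max_right _ _
        · exact le_trans (le_trans (le_max_right _ _) (le_max_right _ _)) (le_max_left _ _)
      · exact le_trans (le_trans (le_max_left _ _) (le_max_right _ _)) (le_max_left _ _)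
    have hXNA : XN ≤ A2 := by
      refine smallgain_elim hsg' hA20 hXN0 ?_
      have h4 : γxz ZN ≤ max (γxz Bz) (max (γxz (γzx XN)) (γxz (γzr RN))) := by
        rw [← hγxz.max_eq (hγzx.nonneg hXN0) (hγzr.nonneg hRN0),
          ← hγxz.max_eq hBz0 (le_max_iff.mpr (Or.inl (hγzx.nonneg hXN0)))]
        exact hγxz.mono hZN0 hZNle
      refine le_trans hXNle (max_le ?_ (max_le (le_trans h4 ?_) ?_))
      · exact le_trans (le_trans (le_max_left _ _) (le_max_left _ _)) (le_max_left _ _)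
      · refine max_le ?_ (max_le ?_ ?_)
        · exact le_trans (le_trans (le_max_right _ _) (le_max_left _ _)) (le_max_left _ _)
        · exact le_max_right _ _
        · exact le_trans (le_trans (le_max_right _ _) (le_max_right _ _)) (le_max_left _ _)
      · exact le_trans (le_trans (le_max_left _ _) (le_max_right _ _)) (le_max_left _ _)
    -- BSIBO sup bound
    have hΞNle : ΞN ≤ max C0 (γ RN) := by
      have hp : ΞN ≤ max (γξz ZN) (max (γξx XN) (γξr RN)) := by
        refine supNorm_le (le_trans (hγξz.nonneg hZN0) (le_max_left _ _)) ?_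
        intro τ hτ
        refine le_trans (hBSIBO t0 τ le_rfl hτ.1) ?_
        have h1 : γξz (supNorm z t0 τ) ≤ γξz ZN :=
          hγξz.mono (supNorm_nonneg _ _ _) (supNorm_le_supNorm hbddz hτ.1 hτ.2)
        have h2 : γξx (supNorm x t0 τ) ≤ γξx XN :=
          hγξx.mono (supNorm_nonneg _ _ _) (supNorm_le_supNorm hbddx hτ.1 hτ.2)
        have h3 : γξr (supNorm r t0 τ) ≤ γξr RN :=
          hγξr.mono (supNorm_nonneg _ _ _) (supNorm_le_supNorm hbddr hτ.1 hτ.2)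
        exact max_le_max h1 (max_le_max h2 h3)
      have hq1 : γξz ZN ≤ max C0 (γ RN) := by
        have h5 : γξz ZN ≤ γξz A1 := hγξz.mono hZN0 hZNA
        rw [hA1def, hγξz.max_eq (le_max_iff.mpr (Or.inl hBz0))
          (le_max_iff.mpr (Or.inl (hγzr.nonneg hRN0)))] at h5
        refine le_trans h5 (max_le ?_ ?_)
        · exact le_trans (le_max_left _ _) (le_max_left _ _)
        · rw [hγdef RN]
          exact le_trans (le_max_left _ _) (le_max_right _ _)
      have hq2 : γξx XN ≤ max C0 (γ RN) := by
        have h5 : γξx XN ≤ γξx A2 := hγξx.mono hXN0 hXNA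
        rw [hA2def, hγξx.max_eq (le_max_iff.mpr (Or.inl hBx0))
          (le_max_iff.mpr (Or.inl (hγxr.nonneg hRN0)))] at h5
        refine le_trans h5 (max_le ?_ ?_)
        · exact le_trans (le_max_right _ _) (le_max_left _ _)
        · rw [hγdef RN]
          exact le_trans (le_max_left (γξx (max (γxr RN) (γxz (γzr RN)))) (γξr RN))
            (le_trans (le_max_right _ _) (le_max_right _ _))
      have hq3 : γξr RN ≤ max C0 (γ RN) := by
        rw [hγdef RN]
        exact le_trans (le_trans (le_max_right _ _) (le_max_right _ _)) (le_max_right _ _)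
      exact le_trans hp (max_le hq1 (max_le hq2 hq3))
    have hΞC0 : ΞN ≤ C0 := by
      rcases eq_or_lt_of_le hRN0 with hR0 | hRpos
      · have hγ0 : γ RN = 0 := by
          rw [← hR0, hγdef]
          simp [hγzr.zero, hγxr.zero, hγzx.zero, hγxz.zero, hγξz.zero, hγξx.zero, hγξr.zero]
        rw [hγ0, max_eq_left hC00] at hΞNle
        exact hΞNle
      · by_contra hcon
        push_neg at hcon
        have hΞpos : 0 < ΞN := lt_of_le_of_lt hC00 hcon
        have h1 : ε * γ RN ≤ γb RN := hγbγ RN hRpos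
        have h3 : ΞN ≤ γ RN := by
          rcases le_max_iff.mp hΞNle with h | h
          · exact absurd h (not_le.mpr hcon)
          · exact h
        nlinarith
    have hRNρ : RN ≤ ρg := hγb.le_reflect hRN0 hρg0
      (by rw [hρge]; exact le_trans hγbRN (le_trans hΞC0 (le_max_left _ _)))
    have hA1Mz : A1 ≤ Mz := by
      refine max_le (le_max_left _ _) (max_le ?_ ?_)
      · exact le_trans (hγzr.mono hRN0 hRNρ) (le_trans (le_max_left _ _) (le_max_right _ _))
      · exact le_trans (hγzx.mono (hγxr.nonneg hRN0) (hγxr.mono hRN0 hRNρ))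
          (le_trans (le_max_right _ _) (le_max_right _ _))
    have hA2Mx : A2 ≤ Mx := by
      refine max_le (le_max_left _ _) (max_le ?_ ?_)
      · exact le_trans (hγxr.mono hRN0 hRNρ) (le_trans (le_max_left _ _) (le_max_right _ _))
      · exact le_trans (hγxz.mono (hγzr.nonneg hRN0) (hγzr.mono hRN0 hRNρ))
          (le_trans (le_max_right _ _) (le_max_right _ _))
    exact ⟨le_trans (le_supNorm hbddξ hu0) hΞC0,
      le_trans (le_supNorm hbddz hu0) (le_trans hZNA hA1Mz),
      le_trans (le_supNorm hbddx hu0) (le_trans hXNA hA2Mx)⟩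
  have hξC0 : ∀ u, t0 ≤ u → ‖ξ u‖ ≤ C0 := by
    intro u hu
    obtain ⟨k, hk⟩ := hZeno u
    exact (hstepB k u ⟨hu, le_of_lt hk⟩).1
  -- tail suprema
  set Ξt : ℕ → ℝ := fun k => sSup ((fun u => ‖ξ u‖) '' Set.Ici (t k)) with hΞtdef
  have hbddξt : ∀ k, BddAbove ((fun u => ‖ξ u‖) '' Set.Ici (t k)) :=
    fun k => ⟨C0, by rintro e ⟨v, hv, rfl⟩; exact hξC0 v (le_trans (ht0le k) hv)⟩
  have hΞtle : ∀ k u, t k ≤ u → ‖ξ u‖ ≤ Ξt k :=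
    fun k u hu => le_csSup (hbddξt k) ⟨u, hu, rfl⟩
  have hΞt0 : ∀ k, 0 ≤ Ξt k := fun k => le_trans (norm_nonneg _) (hΞtle k (t k) le_rfl)
  have hΞtC0 : ∀ k, Ξt k ≤ C0 := fun k =>
    Real.sSup_le (by rintro e ⟨v, hv, rfl⟩; exact hξC0 v (le_trans (ht0le k) hv)) hC00
  -- tail trigger bound for r
  have hrt : ∀ k u, t k ≤ u → γb ‖r u‖ ≤ Ξt k := by
    intro k u hu
    obtain ⟨j, hj1, hj2, hj3⟩ := cover' k u hu
    obtain ⟨sh, hsh, _⟩ := hT_ex j 1 one_pos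
    have hMb : ∀ v ∈ Set.Icc (t j) sh, ‖ξ v‖ ≤ Ξt k :=
      fun v hv => hΞtle k v (le_trans hj3 hv.1)
    obtain ⟨hSpos, hγbS, hrleS⟩ := key j sh hsh (Ξt k) (hΞt0 k) hMb
      (fun u' h1 _ => cover' j u' h1)
    have hmem : u ∈ Set.Icc (t j) sh := ⟨hj1, le_trans (le_of_lt hj2) (hT_ge j sh hsh)⟩
    exact le_trans (hγb.mono (norm_nonneg _) (hrleS u hmem)) hγbS
  -- conclusion 1 : positive dwell time
  obtain ⟨B2, hB20, hB2e⟩ := hγb.exists_eq (show (0:ℝ) ≤ max C0 1 by positivity)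
  obtain ⟨K2, hK2, hK2b⟩ := hKex B2
  have hgap : ∀ k : ℕ, 1 / K2 ≤ t (k + 1) - t k := by
    intro k
    have hlb : ∀ s ∈ T k, t k + 1 / K2 ≤ s := by
      intro s hs
      have hMb : ∀ v ∈ Set.Icc (t k) s, ‖ξ v‖ ≤ C0 :=
        fun v hv => hξC0 v (le_trans (ht0le k) hv.1)
      obtain ⟨hSpos, hγbS, _⟩ := key k s hs C0 hC00 hMb (fun u' h1 _ => cover' k u' h1)
      have hSB : supNorm r (t k) s ≤ B2 :=
        hγb.le_reflect (le_of_lt hSpos) hB20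
          (by rw [hB2e]; exact le_trans hγbS (le_max_left _ _))
      have := dwell k s hs K2 B2 hK2 hK2b hSpos hSB
      linarith
    linarith [hT_lb k (t k + 1 / K2) hlb]
  have hconc1 : 0 < ⨅ k : ℕ, (t (k + 1) - t k) := by
    have h1 : (0:ℝ) < 1 / K2 := by positivity
    exact lt_of_lt_of_le h1 (le_ciInf hgap)
  -- global bounds on z, x, r
  have hrρ : ∀ u, t0 ≤ u → ‖r u‖ ≤ ρg := by
    intro u hu
    refine hγb.le_reflect (norm_nonneg _) hρg0 ?_
    rw [hρge]
    refine le_trans ?_ (le_max_left _ _)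
    have := hrt 0 u (by rw [ht0]; exact hu)
    exact le_trans this (hΞtC0 0)
  have hzMz : ∀ u, t0 ≤ u → ‖z u‖ ≤ Mz := by
    intro u hu
    obtain ⟨k, hk⟩ := hZeno u
    exact (hstepB k u ⟨hu, le_of_lt hk⟩).2.1
  have hxMx : ∀ u, t0 ≤ u → ‖x u‖ ≤ Mx := by
    intro u hu
    obtain ⟨k, hk⟩ := hZeno u
    exact (hstepB k u ⟨hu, le_of_lt hk⟩).2.2
  -- tail sups for z, x, r
  set Zt : ℕ → ℝ := fun k => sSup ((fun u => ‖z u‖) '' Set.Ici (t k)) with hZtdef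
  set Xt : ℕ → ℝ := fun k => sSup ((fun u => ‖x u‖) '' Set.Ici (t k)) with hXtdef
  set Rt : ℕ → ℝ := fun k => sSup ((fun u => ‖r u‖) '' Set.Ici (t k)) with hRtdef
  have hbddzt : ∀ k, BddAbove ((fun u => ‖z u‖) '' Set.Ici (t k)) :=
    fun k => ⟨Mz, by rintro e ⟨v, hv, rfl⟩; exact hzMz v (le_trans (ht0le k) hv)⟩
  have hbddxt : ∀ k, BddAbove ((fun u => ‖x u‖) '' Set.Ici (t k)) :=
    fun k => ⟨Mx, by rintro e ⟨v, hv, rfl⟩; exact hxMx v (le_trans (ht0le k) hv)⟩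
  have hbddrt : ∀ k, BddAbove ((fun u => ‖r u‖) '' Set.Ici (t k)) :=
    fun k => ⟨ρg, by rintro e ⟨v, hv, rfl⟩; exact hrρ v (le_trans (ht0le k) hv)⟩
  have hZtle : ∀ k u, t k ≤ u → ‖z u‖ ≤ Zt k :=
    fun k u hu => le_csSup (hbddzt k) ⟨u, hu, rfl⟩
  have hXtle : ∀ k u, t k ≤ u → ‖x u‖ ≤ Xt k :=
    fun k u hu => le_csSup (hbddxt k) ⟨u, hu, rfl⟩
  have hRtle : ∀ k u, t k ≤ u → ‖r u‖ ≤ Rt k :=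
    fun k u hu => le_csSup (hbddrt k) ⟨u, hu, rfl⟩
  have hZt0 : ∀ k, 0 ≤ Zt k := fun k => le_trans (norm_nonneg _) (hZtle k (t k) le_rfl)
  have hXt0 : ∀ k, 0 ≤ Xt k := fun k => le_trans (norm_nonneg _) (hXtle k (t k) le_rfl)
  have hRt0 : ∀ k, 0 ≤ Rt k := fun k => le_trans (norm_nonneg _) (hRtle k (t k) le_rfl)
  have hZta : Antitone Zt := fun k k' hkk' =>
    csSup_le_csSup (hbddzt k) ⟨‖z (t k')‖, t k', Set.self_mem_Ici, rfl⟩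
      (Set.image_mono (Set.Ici_subset_Ici.mpr (hmono.monotone hkk')))
  have hXta : Antitone Xt := fun k k' hkk' =>
    csSup_le_csSup (hbddxt k) ⟨‖x (t k')‖, t k', Set.self_mem_Ici, rfl⟩
      (Set.image_mono (Set.Ici_subset_Ici.mpr (hmono.monotone hkk')))
  have hRta : Antitone Rt := fun k k' hkk' =>
    csSup_le_csSup (hbddrt k) ⟨‖r (t k')‖, t k', Set.self_mem_Ici, rfl⟩
      (Set.image_mono (Set.Ici_subset_Ici.mpr (hmono.monotone hkk')))
  have hΞta : Antitone Ξt := fun k k' hkk' =>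
    csSup_le_csSup (hbddξt k) ⟨‖ξ (t k')‖, t k', Set.self_mem_Ici, rfl⟩
      (Set.image_mono (Set.Ici_subset_Ici.mpr (hmono.monotone hkk')))
  set zI := ⨅ k : ℕ, Zt k with hzIdef
  set xI := ⨅ k : ℕ, Xt k with hxIdef
  set rI := ⨅ k : ℕ, Rt k with hrIdef
  set ξI := ⨅ k : ℕ, Ξt k with hξIdef
  have hbdlz : BddBelow (Set.range Zt) := ⟨0, by rintro e ⟨k, rfl⟩; exact hZt0 k⟩
  have hbdlx : BddBelow (Set.range Xt) := ⟨0, by rintro e ⟨k, rfl⟩; exact hXt0 k⟩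
  have hbdlr : BddBelow (Set.range Rt) := ⟨0, by rintro e ⟨k, rfl⟩; exact hRt0 k⟩
  have hbdlξ : BddBelow (Set.range Ξt) := ⟨0, by rintro e ⟨k, rfl⟩; exact hΞt0 k⟩
  have hzI0 : 0 ≤ zI := le_ciInf hZt0
  have hxI0 : 0 ≤ xI := le_ciInf hXt0
  have hrI0 : 0 ≤ rI := le_ciInf hRt0
  have hξI0 : 0 ≤ ξI := le_ciInf hΞt0
  have hZtt : Filter.Tendsto Zt Filter.atTop (nhds zI) := tendsto_atTop_ciInf hZta hbdlz
  have hXtt : Filter.Tendsto Xt Filter.atTop (nhds xI) := tendsto_atTop_ciInf hXta hbdlx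
  have hRtt : Filter.Tendsto Rt Filter.atTop (nhds rI) := tendsto_atTop_ciInf hRta hbdlr
  have hΞtt : Filter.Tendsto Ξt Filter.atTop (nhds ξI) := tendsto_atTop_ciInf hΞta hbdlξ
  -- generic: composing a K∞ function with a tendsto sequence in Ici 0
  have hcomp : ∀ (g : ℝ → ℝ), IsClassKInf g → ∀ (f : ℕ → ℝ) (a : ℝ), 0 ≤ a →
      (∀ k, 0 ≤ f k) → Filter.Tendsto f Filter.atTop (nhds a) →
      Filter.Tendsto (fun k => g (f k)) Filter.atTop (nhds (g a)) := by
    intro g hg f a ha hf hft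
    exact (hg.1 a ha).tendsto.comp
      (tendsto_nhdsWithin_iff.mpr ⟨hft, Filter.Eventually.of_forall hf⟩)
  -- ISS tail bounds
  have hsupx_tail : ∀ (k : ℕ) (τ : ℝ), t k ≤ τ → supNorm x (t k) τ ≤ Xt k := by
    intro k τ hτ
    exact csSup_le_csSup (hbddxt k) ⟨‖x (t k)‖, t k, ⟨le_rfl, hτ⟩, rfl⟩
      (Set.image_mono Set.Icc_subset_Ici_self)
  have hsupz_tail : ∀ (k : ℕ) (τ : ℝ), t k ≤ τ → supNorm z (t k) τ ≤ Zt k := by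
    intro k τ hτ
    exact csSup_le_csSup (hbddzt k) ⟨‖z (t k)‖, t k, ⟨le_rfl, hτ⟩, rfl⟩
      (Set.image_mono Set.Icc_subset_Ici_self)
  have hsupr_tail : ∀ (k : ℕ) (τ : ℝ), t k ≤ τ → supNorm r (t k) τ ≤ Rt k := by
    intro k τ hτ
    exact csSup_le_csSup (hbddrt k) ⟨‖r (t k)‖, t k, ⟨le_rfl, hτ⟩, rfl⟩
      (Set.image_mono Set.Icc_subset_Ici_self)
  have hzIle : ∀ k, zI ≤ max (γzx (Xt k)) (γzr (Rt k)) := by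
    intro k
    have hCk0 : 0 ≤ max (γzx (Xt k)) (γzr (Rt k)) :=
      le_trans (hγzx.nonneg (hXt0 k)) (le_max_left _ _)
    refine le_of_forall_pos_le_add ?_
    intro η hη
    have hsub : Filter.Tendsto (fun m : ℕ => t m - t k) Filter.atTop Filter.atTop := by
      simpa [sub_eq_add_neg] using tendsto_atTop_add_const_right Filter.atTop (-(t k)) htop
    have htendβ : Filter.Tendsto (fun m : ℕ => βz ‖z (t k)‖ (t m - t k))
        Filter.atTop (nhds 0) := (hβz.2 _ (norm_nonneg _)).2.comp hsub
    obtain ⟨mlt, hm1, hm2⟩ :=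
      ((htendβ.eventually (eventually_lt_nhds hη)).and (eventually_ge_atTop k)).exists
    have htkm : t k ≤ t mlt := hmono.monotone hm2
    have hZm : Zt mlt ≤ max (βz ‖z (t k)‖ (t mlt - t k))
        (max (γzx (Xt k)) (γzr (Rt k))) := by
      refine Real.sSup_le ?_ (le_trans hCk0 (le_max_right _ _))
      rintro e ⟨τ, hτ, rfl⟩
      have hτk : t k ≤ τ := le_trans htkm hτ
      refine le_trans (hISSz (t k) τ (ht0le k) hτk) (max_le_max ?_ (max_le_max ?_ ?_))
      · exact hβz.anti (norm_nonneg _) (by linarith) (by simp at hτ; linarith)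
      · exact hγzx.mono (supNorm_nonneg _ _ _) (hsupx_tail k τ hτk)
      · exact hγzr.mono (supNorm_nonneg _ _ _) (hsupr_tail k τ hτk)
    have h2 : zI ≤ Zt mlt := ciInf_le hbdlz mlt
    have h3 : max (βz ‖z (t k)‖ (t mlt - t k)) (max (γzx (Xt k)) (γzr (Rt k)))
        ≤ max (γzx (Xt k)) (γzr (Rt k)) + η := max_le (by linarith) (by linarith)
    linarith
  have hxIle : ∀ k, xI ≤ max (γxz (Zt k)) (γxr (Rt k)) := by
    intro k
    have hCk0 : 0 ≤ max (γxz (Zt k)) (γxr (Rt k)) :=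
      le_trans (hγxz.nonneg (hZt0 k)) (le_max_left _ _)
    refine le_of_forall_pos_le_add ?_
    intro η hη
    have hsub : Filter.Tendsto (fun m : ℕ => t m - t k) Filter.atTop Filter.atTop := by
      simpa [sub_eq_add_neg] using tendsto_atTop_add_const_right Filter.atTop (-(t k)) htop
    have htendβ : Filter.Tendsto (fun m : ℕ => βx ‖x (t k)‖ (t m - t k))
        Filter.atTop (nhds 0) := (hβx.2 _ (norm_nonneg _)).2.comp hsub
    obtain ⟨mlt, hm1, hm2⟩ :=
      ((htendβ.eventually (eventually_lt_nhds hη)).and (eventually_ge_atTop k)).exists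
    have htkm : t k ≤ t mlt := hmono.monotone hm2
    have hXm : Xt mlt ≤ max (βx ‖x (t k)‖ (t mlt - t k))
        (max (γxz (Zt k)) (γxr (Rt k))) := by
      refine Real.sSup_le ?_ (le_trans hCk0 (le_max_right _ _))
      rintro e ⟨τ, hτ, rfl⟩
      have hτk : t k ≤ τ := le_trans htkm hτ
      refine le_trans (hISSx (t k) τ (ht0le k) hτk) (max_le_max ?_ (max_le_max ?_ ?_))
      · exact hβx.anti (norm_nonneg _) (by linarith) (by simp at hτ; linarith)
      · exact hγxz.mono (supNorm_nonneg _ _ _) (hsupz_tail k τ hτk)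
      · exact hγxr.mono (supNorm_nonneg _ _ _) (hsupr_tail k τ hτk)
    have h2 : xI ≤ Xt mlt := ciInf_le hbdlx mlt
    have h3 : max (βx ‖x (t k)‖ (t mlt - t k)) (max (γxz (Zt k)) (γxr (Rt k)))
        ≤ max (γxz (Zt k)) (γxr (Rt k)) + η := max_le (by linarith) (by linarith)
    linarith
  have hξIle : ∀ k, ξI ≤ max (γξz (Zt k)) (max (γξx (Xt k)) (γξr (Rt k))) := by
    intro k
    refine le_trans (ciInf_le hbdlξ k) ?_
    refine Real.sSup_le ?_ (le_trans (hγξz.nonneg (hZt0 k)) (le_max_left _ _))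
    rintro e ⟨τ, hτ, rfl⟩
    have hτk : t k ≤ τ := hτ
    refine le_trans (hBSIBO (t k) τ (ht0le k) hτk) (max_le_max ?_ (max_le_max ?_ ?_))
    · exact hγξz.mono (supNorm_nonneg _ _ _) (hsupz_tail k τ hτk)
    · exact hγξx.mono (supNorm_nonneg _ _ _) (hsupx_tail k τ hτk)
    · exact hγξr.mono (supNorm_nonneg _ _ _) (hsupr_tail k τ hτk)
  -- pass to the limit
  have hzIfin : zI ≤ max (γzx xI) (γzr rI) := by
    have ht1 := (hcomp γzx hγzx Xt xI hxI0 hXt0 hXtt).max (hcomp γzr hγzr Rt rI hrI0 hRt0 hRtt)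
    exact ge_of_tendsto ht1 (Filter.Eventually.of_forall hzIle)
  have hxIfin : xI ≤ max (γxz zI) (γxr rI) := by
    have ht1 := (hcomp γxz hγxz Zt zI hzI0 hZt0 hZtt).max (hcomp γxr hγxr Rt rI hrI0 hRt0 hRtt)
    exact ge_of_tendsto ht1 (Filter.Eventually.of_forall hxIle)
  have hξIfin : ξI ≤ max (γξz zI) (max (γξx xI) (γξr rI)) := by
    have ht1 := (hcomp γξz hγξz Zt zI hzI0 hZt0 hZtt).max
      ((hcomp γξx hγξx Xt xI hxI0 hXt0 hXtt).max (hcomp γξr hγξr Rt rI hrI0 hRt0 hRtt))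
    exact ge_of_tendsto ht1 (Filter.Eventually.of_forall hξIle)
  have hγbrI : γb rI ≤ ξI := by
    have h1 : ∀ k, γb (Rt k) ≤ Ξt k := by
      intro k
      obtain ⟨B1, hB10, hB1e⟩ := hγb.exists_eq (hΞt0 k)
      have h2 : Rt k ≤ B1 := Real.sSup_le (by
        rintro e ⟨v, hv, rfl⟩
        exact hγb.le_reflect (norm_nonneg _) hB10 (by rw [hB1e]; exact hrt k v hv)) hB10
      exact le_of_le_of_eq (hγb.mono (hRt0 k) h2) hB1e
    exact le_of_tendsto_of_tendsto'
      (hcomp γb hγb Rt rI hrI0 hRt0 hRtt) hΞtt h1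
  -- small gain at infinity
  have hzIA : zI ≤ max (γzx (γxr rI)) (γzr rI) := by
    refine smallgain_elim hsg (le_trans (hγzx.nonneg (hγxr.nonneg hrI0)) (le_max_left _ _))
      hzI0 ?_
    have h4 : γzx xI ≤ max (γzx (γxz zI)) (γzx (γxr rI)) := by
      rw [← hγzx.max_eq (hγxz.nonneg hzI0) (hγxr.nonneg hrI0)]
      exact hγzx.mono hxI0 hxIfin
    refine le_trans hzIfin (max_le (le_trans h4 (max_le ?_ ?_)) ?_)
    · exact le_max_right _ _
    · exact le_trans (le_max_left _ _) (le_max_left _ _)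
    · exact le_trans (le_max_right _ _) (le_max_left _ _)
  have hxIA : xI ≤ max (γxz (γzr rI)) (γxr rI) := by
    refine smallgain_elim hsg' (le_trans (hγxz.nonneg (hγzr.nonneg hrI0)) (le_max_left _ _))
      hxI0 ?_
    have h4 : γxz zI ≤ max (γxz (γzx xI)) (γxz (γzr rI)) := by
      rw [← hγxz.max_eq (hγzx.nonneg hxI0) (hγzr.nonneg hrI0)]
      exact hγxz.mono hzI0 hzIfin
    refine le_trans hxIfin (max_le (le_trans h4 (max_le ?_ ?_)) ?_)
    · exact le_max_right _ _
    · exact le_trans (le_max_left _ _) (le_max_left _ _)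
    · exact le_trans (le_max_right _ _) (le_max_left _ _)
  -- rI = 0
  have hrIzero : rI = 0 := by
    by_contra hne
    have hrpos : 0 < rI := lt_of_le_of_ne hrI0 (Ne.symm hne)
    have h1 : ξI ≤ γ rI := by
      refine le_trans hξIfin ?_
      rw [hγdef rI]
      refine max_le ?_ (max_le ?_ ?_)
      · refine le_trans (hγξz.mono hzI0 (le_trans hzIA (le_of_eq (max_comm _ _))))
          (le_max_left _ _)
      · refine le_trans (hγξx.mono hxI0 (le_trans hxIA (le_of_eq (max_comm _ _))))
          (le_trans (le_max_left _ _) (le_max_right _ _))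
      · exact le_trans (le_max_right _ _) (le_max_right _ _)
    have h2 : ε * γ rI ≤ γb rI := hγbγ rI hrpos
    have h4 : 0 < γ rI := by
      rw [hγdef rI]
      exact lt_of_lt_of_le (hγξr.pos hrpos)
        (le_trans (le_max_right _ _) (le_max_right _ _))
    have h5 : ε * γ rI ≤ γ rI := le_trans h2 (le_trans hγbrI h1)
    exact absurd ((mul_le_iff_le_one_left h4).mp h5) (not_le.mpr hε)
  have hzIzero : zI = 0 := by
    refine le_antisymm ?_ hzI0
    have := hzIA
    rw [hrIzero, hγxr.zero, hγzx.zero, hγzr.zero, max_self] at this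
    exact this
  have hxIzero : xI = 0 := by
    refine le_antisymm ?_ hxI0
    have := hxIA
    rw [hrIzero, hγzr.zero, hγxz.zero, hγxr.zero, max_self] at this
    exact this
  -- conclude
  refine ⟨hconc1, ?_, ?_⟩
  · rw [Metric.tendsto_atTop]
    intro η hη
    have hlt : ⨅ k : ℕ, Zt k < η := by rw [← hzIdef, hzIzero]; exact hη
    obtain ⟨k, hk⟩ := exists_lt_of_ciInf_lt hlt
    exact ⟨t k, fun τ hτ => by
      rw [dist_zero_right]; exact lt_of_le_of_lt (hZtle k τ hτ) hk⟩
  · rw [Metric.tendsto_atTop]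
    intro η hη
    have hlt : ⨅ k : ℕ, Xt k < η := by rw [← hxIdef, hxIzero]; exact hη
    obtain ⟨k, hk⟩ := exists_lt_of_ciInf_lt hlt
    exact ⟨t k, fun τ hτ => by
      rw [dist_zero_right]; exact lt_of_le_of_lt (hXtle k τ hτ) hk⟩
end

section
/- Let b₁ > 0, c₁ > 0 be constants and let ψ ≥ 0, m ≥ 0, ι ≥ 0, a ≥ 0, x̄₁, x̄₂, F be real numbers with |F| ≤ ι·a + m·|x̄₁|. Define ϑ₁ := −(c₁ + b₁²/4 + m + ψ)·x̄₁/b₁. Then x̄₁·(F + b₁·ϑ₁ + b₁·x̄₂) ≤ −ψ·x̄₁² + (ι·a)²/(4·c₁) + x̄₂². -/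
open Filter Set

/-- The pointwise Lyapunov derivative estimate in the first step (j = 1) of the proof of
Lemma 2 for lower-triangular systems. -/
theorem lyapunov_estimate_first_step (b₁ c₁ ψ m ι a x₁ x₂ F : ℝ)
    (hb : 0 < b₁) (hc : 0 < c₁) (hψ : 0 ≤ ψ) (hm : 0 ≤ m) (hι : 0 ≤ ι) (ha : 0 ≤ a)
    (hF : |F| ≤ ι * a + m * |x₁|) :
    x₁ * (F + b₁ * (-(c₁ + b₁ ^ 2 / 4 + m + ψ) * x₁ / b₁) + b₁ * x₂) ≤
      -ψ * x₁ ^ 2 + (ι * a) ^ 2 / (4 * c₁) + x₂ ^ 2 := by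
  have hcancel : b₁ * (-(c₁ + b₁ ^ 2 / 4 + m + ψ) * x₁ / b₁) =
      -(c₁ + b₁ ^ 2 / 4 + m + ψ) * x₁ := by
    field_simp
  rw [hcancel]
  have h1 : x₁ * F ≤ ι * a * |x₁| + m * x₁ ^ 2 := by
    have := abs_le.mp hF
    have h2 : x₁ * F ≤ |x₁| * |F| := by
      calc x₁ * F ≤ |x₁ * F| := le_abs_self _
        _ = |x₁| * |F| := abs_mul _ _
    calc x₁ * F ≤ |x₁| * (ι * a + m * |x₁|) :=
          h2.trans (mul_le_mul_of_nonneg_left hF (abs_nonneg _))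
      _ = ι * a * |x₁| + m * x₁ ^ 2 := by rw [mul_add, ← sq_abs x₁]; ring
  have h3 : ι * a * |x₁| ≤ c₁ * x₁ ^ 2 + (ι * a) ^ 2 / (4 * c₁) := by
    have h4c : (0:ℝ) < 4 * c₁ := by positivity
    rw [← sub_le_iff_le_add', le_div_iff₀ h4c, ← sq_abs x₁]
    nlinarith [sq_nonneg (ι * a - 2 * c₁ * |x₁|)]
  have h4 : b₁ * x₁ * x₂ ≤ b₁ ^ 2 / 4 * x₁ ^ 2 + x₂ ^ 2 := by
    nlinarith [sq_nonneg (b₁ * x₁ / 2 - x₂)]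
  have h3' : ι * a * |x₁| ≤ c₁ * x₁ ^ 2 + (ι * a) ^ 2 / (4 * c₁) := h3
  nlinarith [h1, h3', h4]
end

section
/- Let b > 0, c > 0 be constants and let ψ ≥ 0, m ≥ 0, m̃ ≥ 0, ι ≥ 0, Z ≥ 0, X ≥ 0, x̄, v, F be real numbers with |F| ≤ ι·Z + m̃·X + m·|x̄|. Define ϑ := −(2c + b²/4 + m + ψ)·x̄/b. Then x̄·(F + b·ϑ + b·v) ≤ −ψ·x̄² + (ι·Z)²/(4·c) + (m̃·X)²/(4·c) + v². -/
open Filter Set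

/-- The pointwise Lyapunov derivative estimate in the recursive step (j ≥ 2) of the proof
of Lemma 2 for lower-triangular systems. -/
theorem lyapunov_estimate_recursive_step (b c ψ m mt ι Z X xb v F : ℝ)
    (hb : 0 < b) (hc : 0 < c) (hψ : 0 ≤ ψ) (hm : 0 ≤ m) (hmt : 0 ≤ mt) (hι : 0 ≤ ι)
    (hZ : 0 ≤ Z) (hX : 0 ≤ X)
    (hF : |F| ≤ ι * Z + mt * X + m * |xb|) :
    xb * (F + b * (-(2 * c + b ^ 2 / 4 + m + ψ) * xb / b) + b * v) ≤
      -ψ * xb ^ 2 + (ι * Z) ^ 2 / (4 * c) + (mt * X) ^ 2 / (4 * c) + v ^ 2 := by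
  have hbne : b ≠ 0 := hb.ne'
  have hcancel : b * (-(2 * c + b ^ 2 / 4 + m + ψ) * xb / b)
      = -(2 * c + b ^ 2 / 4 + m + ψ) * xb := by
    rw [mul_div_assoc', mul_div_cancel_left₀ _ hbne]
  rw [hcancel]
  set A := |xb| with hA
  clear_value A
  have hA2 : A ^ 2 = xb ^ 2 := by rw [hA]; exact sq_abs xb
  have h1 : xb * F ≤ A * (ι * Z) + A * (mt * X) + m * xb ^ 2 := by
    have := mul_le_mul_of_nonneg_left hF (abs_nonneg xb)
    calc xb * F ≤ |xb * F| := le_abs_self _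
    _ = A * |F| := by rw [abs_mul, hA]
    _ ≤ A * (ι * Z + mt * X + m * A) := by rw [hA]; simpa [← hA] using this
    _ = A * (ι * Z) + A * (mt * X) + m * xb ^ 2 := by rw [← hA2]; ring
  have e1 : A * (ι * Z) - c * A ^ 2 ≤ (ι * Z) ^ 2 / (4 * c) := by
    rw [le_div_iff₀ (by positivity)]
    nlinarith [sq_nonneg (ι * Z - 2 * c * A)]
  have e2 : A * (mt * X) - c * A ^ 2 ≤ (mt * X) ^ 2 / (4 * c) := by
    rw [le_div_iff₀ (by positivity)]
    nlinarith [sq_nonneg (mt * X - 2 * c * A)]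
  have e3 : xb * (b * v) ≤ b ^ 2 / 4 * xb ^ 2 + v ^ 2 := by
    nlinarith [sq_nonneg (b * xb - 2 * v)]
  nlinarith [h1, e1, e2, e3, hA2]
end
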